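/- Every K-trivially valued C-minimal R-module (M,v) is henselian, i.e., for every separable s ∈ R the map x ↦ x.s is a bijection of M_{>θ}. -/

import Mathlib

open FirstOrder Language Set

universe u v w x y

/-! ## Skew polynomial rings `K[t;φ]` -/

/-- `(R, ι, t)` realizes the skew polynomial ring `K[t;φ]` : the commutation rule
`a·t = t·a^φ` holds, and every element of `R` is uniquely a finite sum `∑ tⁱ·aᵢ`
with right-hand coefficients `aᵢ ∈ K`. -/
structure IsSkewPolyRing (K : Type u) [Field K] (φ : K →+* K) (R : Type v) [Ring R]
    (ι : K →+* R) (t : R) : Prop where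
  commute_rule : ∀ a : K, ι a * t = t * ι (φ a)
  unique_rep : ∀ r : R, ∃! c : ℕ →₀ K, r = c.sum fun i a => t ^ i * ι a

/-- Right scalar multiplication of a right `R`-module (i.e. a module over `Rᵐᵒᵖ`). -/
abbrev rsmul {R : Type v} [Ring R] {M : Type w} [AddCommGroup M] [Module Rᵐᵒᵖ M]
    (x : M) (r : R) : M :=
  MulOpposite.op r • x

/-- The set `M.r` is everything, i.e. `x ↦ x.r` is surjective, for every nonzero `r`:
`M` is a divisible right `R`-module. -/
def RDivisible (R : Type v) [Ring R] (M : Type w) [AddCommGroup M] [Module Rᵐᵒᵖ M] : Prop :=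
  ∀ r : R, r ≠ 0 → ∀ y : M, ∃ x : M, rsmul x r = y

/-- A subset `N` of `M` is divisible: `N.r = N` for every nonzero `r ∈ R`. -/
def RDivisibleIn (R : Type v) [Ring R] {M : Type w} [AddCommGroup M] [Module Rᵐᵒᵖ M]
    (N : Set M) : Prop :=
  ∀ r : R, r ≠ 0 → ∀ y ∈ N, ∃ x ∈ N, rsmul x r = y

/-- The torsion subset of a right `R`-module. -/
def torsionSet (R : Type v) [Ring R] (M : Type w) [AddCommGroup M] [Module Rᵐᵒᵖ M] :
    Set M :=
  {z : M | ∃ r : R, r ≠ 0 ∧ rsmul z r = 0}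

/-- `s ∈ R` is separable if it is not divisible by `t`. -/
def SeparablePoly {R : Type v} [Ring R] (t s : R) : Prop :=
  ¬ ∃ q : R, s = t * q

/-- `M = A ⊕ B` as an internal direct sum of subsets. -/
def IsInternalDirectSum {M : Type w} [AddCommGroup M] (A B : Set M) : Prop :=
  ∀ x : M, ∃! p : M × M, p.1 ∈ A ∧ p.2 ∈ B ∧ x = p.1 + p.2

/-- The quotient `R/rR` is a (skew) field: `rR` is a proper two-sided ideal and every
element not in `rR` is invertible modulo `rR`. -/
def QuotByIsDivisionRing (R : Type v) [Ring R] (r : R) : Prop :=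
  (¬ ∃ s : R, 1 = r * s) ∧
  (∀ a s : R, ∃ s' : R, a * (r * s) = r * s') ∧
  (∀ q : R, (¬ ∃ s : R, q = r * s) →
    ∃ q' : R, (∃ s : R, q * q' - 1 = r * s) ∧ (∃ s : R, q' * q - 1 = r * s))

/-! ## Languages -/

/-- The language of right `R`-modules: constant `0`, unary `-` and `·r` (`r ∈ R`),
binary `+`. -/
def modLang (R : Type v) : FirstOrder.Language.{v, 0} :=
  ⟨fun n => match n with
    | 0 => PUnit
    | 1 => Option R
    | 2 => PUnit
    | _ => PEmpty,
   fun _ => PEmpty⟩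

/-- The language of right `R`-modules together with a ternary relation symbol `C`. -/
def cModLang (R : Type v) : FirstOrder.Language.{v, 0} :=
  ⟨(modLang R).Functions,
   fun n => match n with
    | 3 => PUnit
    | _ => PEmpty⟩

/-- The pure language of a `C`-relation: a single ternary relation symbol. -/
def cLang : FirstOrder.Language.{0, 0} :=
  ⟨fun _ => PEmpty,
   fun n => match n with
    | 3 => PUnit
    | _ => PEmpty⟩

/-- The language `L_V = {<, ∞, (·r)_{r ∈ R}}` of `R`-chains. -/
def chainLang (R : Type v) : FirstOrder.Language.{v, 0} :=
  ⟨fun n => match n with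
    | 0 => PUnit
    | 1 => R
    | _ => PEmpty,
   fun n => match n with
    | 2 => PUnit
    | _ => PEmpty⟩

/-- The language `L'_V = L_V ∪ {Rₙ : n ∈ ℕ}` with additional unary predicates `Rₙ`. -/
def chainLang' (R : Type v) : FirstOrder.Language.{v, 0} :=
  ⟨(chainLang R).Functions,
   fun n => match n with
    | 1 => ℕ
    | 2 => PUnit
    | _ => PEmpty⟩

/-! ## Structures -/

/-- Any right `R`-module is a `modLang R`-structure. -/
instance modStructure (R : Type v) [Ring R] (M : Type w) [AddCommGroup M]
    [Module Rᵐᵒᵖ M] : (modLang R).Structure M where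
  funMap {n} f x :=
    match n, f, x with
    | 0, _, _ => 0
    | 1, none, x => -x 0
    | 1, some r, x => rsmul (x 0) r
    | 2, _, x => x 0 + x 1
    | _ + 3, f, _ => PEmpty.elim f
  RelMap {_} r _ := PEmpty.elim r

/-- A subset of `M` closed under the module operations. -/
structure SubmoduleSet (R : Type v) [Ring R] (M : Type w) [AddCommGroup M]
    [Module Rᵐᵒᵖ M] (N : Set M) : Prop where
  zero_mem : (0 : M) ∈ N
  add_mem : ∀ x y : M, x ∈ N → y ∈ N → x + y ∈ N
  neg_mem : ∀ x : M, x ∈ N → -x ∈ N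
  smul_mem : ∀ (r : R) (x : M), x ∈ N → rsmul x r ∈ N

/-- The `modLang R`-structure on a subset closed under the module operations. -/
def setModStructure (R : Type v) [Ring R] (M : Type w) [AddCommGroup M] [Module Rᵐᵒᵖ M]
    (N : Set M) (h : SubmoduleSet R M N) : (modLang R).Structure N where
  funMap {n} f x :=
    match n, f, x with
    | 0, _, _ => ⟨0, h.zero_mem⟩
    | 1, none, x => ⟨-(x 0 : M), h.neg_mem _ (x 0).2⟩
    | 1, some r, x => ⟨rsmul (x 0 : M) r, h.smul_mem r _ (x 0).2⟩
    | 2, _, x => ⟨(x 0 : M) + (x 1 : M), h.add_mem _ _ (x 0).2 (x 1).2⟩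
    | _ + 3, f, _ => PEmpty.elim f
  RelMap {_} r _ := PEmpty.elim r

/-- The `cModLang R`-structure on a right `R`-module endowed with a ternary relation `C`. -/
def cModStructure (R : Type v) [Ring R] (M : Type w) [AddCommGroup M] [Module Rᵐᵒᵖ M]
    (C : M → M → M → Prop) : (cModLang R).Structure M where
  funMap {n} f x :=
    match n, f, x with
    | 0, _, _ => 0
    | 1, none, x => -x 0
    | 1, some r, x => rsmul (x 0) r
    | 2, _, x => x 0 + x 1
    | _ + 3, f, _ => PEmpty.elim f
  RelMap {n} r x :=
    match n, r, x with
    | 3, _, x => C (x 0) (x 1) (x 2)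
    | 0, r, _ => PEmpty.elim r
    | 1, r, _ => PEmpty.elim r
    | 2, r, _ => PEmpty.elim r
    | _ + 4, r, _ => PEmpty.elim r

/-- The `cModLang R`-structure on a subset closed under the module operations, with a
ternary relation `C` restricted from the ambient module. -/
def cModStructureSet (R : Type v) [Ring R] (M : Type w) [AddCommGroup M] [Module Rᵐᵒᵖ M]
    (N : Set M) (h : SubmoduleSet R M N) (C : M → M → M → Prop) :
    (cModLang R).Structure N where
  funMap {n} f x :=
    match n, f, x with
    | 0, _, _ => ⟨0, h.zero_mem⟩
    | 1, none, x => ⟨-(x 0 : M), h.neg_mem _ (x 0).2⟩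
    | 1, some r, x => ⟨rsmul (x 0 : M) r, h.smul_mem r _ (x 0).2⟩
    | 2, _, x => ⟨(x 0 : M) + (x 1 : M), h.add_mem _ _ (x 0).2 (x 1).2⟩
    | _ + 3, f, _ => PEmpty.elim f
  RelMap {n} r x :=
    match n, r, x with
    | 3, _, x => C (x 0) (x 1) (x 2)
    | 0, r, _ => PEmpty.elim r
    | 1, r, _ => PEmpty.elim r
    | 2, r, _ => PEmpty.elim r
    | _ + 4, r, _ => PEmpty.elim r

/-- The `cLang`-structure determined by a ternary relation. -/
def cRelStructure (N : Type w) (C : N → N → N → Prop) : cLang.Structure N where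
  funMap {_} f _ := PEmpty.elim f
  RelMap {n} r x :=
    match n, r, x with
    | 3, _, x => C (x 0) (x 1) (x 2)
    | 0, r, _ => PEmpty.elim r
    | 1, r, _ => PEmpty.elim r
    | 2, r, _ => PEmpty.elim r
    | _ + 4, r, _ => PEmpty.elim r

/-- The `chainLang R`-structure (`L_V`-structure) on a chain `Δ` with maximum `infty`
and action `act` of `R`. -/
def chainStructure (R : Type v) [Ring R] (Δ : Type w) [LinearOrder Δ]
    (infty : Δ) (act : Δ → R → Δ) : (chainLang R).Structure Δ where
  funMap {n} f x :=
    match n, f, x with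
    | 0, _, _ => infty
    | 1, r, x => act (x 0) r
    | _ + 2, f, _ => PEmpty.elim f
  RelMap {n} r x :=
    match n, r, x with
    | 2, _, x => x 0 < x 1
    | 0, r, _ => PEmpty.elim r
    | 1, r, _ => PEmpty.elim r
    | _ + 3, r, _ => PEmpty.elim r

/-- The `chainLang' R`-structure (`L'_V`-structure) on the chain of a valued module:
the unary predicate `Rₙ` holds at `γ` iff `|M_{≥γ}/M_{>γ}| ≥ n`. -/
def chainStructure' (R : Type v) [Ring R] (M : Type w) [AddCommGroup M]
    (Δ : Type x) [LinearOrder Δ] (infty : Δ) (act : Δ → R → Δ) (v : M → Δ) :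
    (chainLang' R).Structure Δ where
  funMap {n} f x :=
    match n, f, x with
    | 0, _, _ => infty
    | 1, r, x => act (x 0) r
    | _ + 2, f, _ => PEmpty.elim f
  RelMap {n} r x :=
    match n, r, x with
    | 1, k, x =>
        ∃ f : Fin k → M, (∀ i, x 0 ≤ v (f i)) ∧ ∀ i j, i ≠ j → v (f i - f j) ≤ x 0
    | 2, _, x => x 0 < x 1
    | 0, r, _ => PEmpty.elim r
    | _ + 3, r, _ => PEmpty.elim r

/-- The `chainLang R`-structure on a subset of a chain closed under the action. -/
def chainStructureOn (R : Type v) [Ring R] (Δ : Type w) [LinearOrder Δ]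
    (infty : Δ) (act : Δ → R → Δ) (S : Set Δ)
    (h0 : infty ∈ S) (hcl : ∀ δ ∈ S, ∀ r : R, act δ r ∈ S) :
    (chainLang R).Structure S where
  funMap {n} f x :=
    match n, f, x with
    | 0, _, _ => ⟨infty, h0⟩
    | 1, r, x => ⟨act (x 0 : Δ) r, hcl _ (x 0).2 r⟩
    | _ + 2, f, _ => PEmpty.elim f
  RelMap {n} r x :=
    match n, r, x with
    | 2, _, x => (x 0 : Δ) < (x 1 : Δ)
    | 0, r, _ => PEmpty.elim r
    | 1, r, _ => PEmpty.elim r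
    | _ + 3, r, _ => PEmpty.elim r

/-! ## Minimality notions -/

/-- A structure is strongly minimal if in every elementarily equivalent structure,
every subset definable with parameters is finite or cofinite. -/
def StronglyMinimal (L : FirstOrder.Language.{u, v}) (M : Type w) [L.Structure M] : Prop :=
  ∀ (N : Type w) [L.Structure N],
    L.ElementarilyEquivalent M N →
      ∀ s : Set N, Set.Definable₁ (univ : Set N) L s → s.Finite ∨ sᶜ.Finite

/-- Strong minimality of a subset of a module, viewed as a right `R`-module in its own
right (for any witness that it is a submodule). -/
def StronglyMinimalSet (R : Type v) [Ring R] {M : Type w} [AddCommGroup M]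
    [Module Rᵐᵒᵖ M] (N : Set M) : Prop :=
  ∀ h : SubmoduleSet R M N,
    letI := setModStructure R M N h
    StronglyMinimal (modLang R) N

/-- A subset is quantifier-free definable, with parameters, using only the ternary
relation `C`. -/
def QFCDefinable {N : Type w} (C : N → N → N → Prop) (s : Set N) : Prop :=
  letI : cLang.Structure N := cRelStructure N C
  ∃ (k : ℕ) (φ : cLang.Formula (Fin k ⊕ Fin 1)) (c : Fin k → N),
    φ.IsQF ∧ s = {a : N | φ.Realize (Sum.elim c fun _ => a)}

/-- A structure in a language `L` with a distinguished ternary relation symbol `c` is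
`C`-minimal if in every elementarily equivalent structure, every subset definable with
parameters is quantifier-free definable using only the relation `C`. -/
def CMinimal (L : FirstOrder.Language.{u, v}) (c : L.Relations 3) (M : Type w) [L.Structure M] :
    Prop :=
  ∀ (N : Type w) [L.Structure N],
    L.ElementarilyEquivalent M N →
      ∀ s : Set N, Set.Definable₁ (univ : Set N) L s →
        QFCDefinable (fun a b d => Structure.RelMap c ![a, b, d]) s

/-- `C`-minimality of a subset of a module closed under the module operations,
with the `C`-relation restricted from the ambient module. -/
def CMinimalSet (R : Type v) [Ring R] (M : Type w) [AddCommGroup M] [Module Rᵐᵒᵖ M]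
    (N : Set M) (C : M → M → M → Prop) : Prop :=
  ∀ h : SubmoduleSet R M N,
    letI := cModStructureSet R M N h C
    CMinimal (cModLang R) PUnit.unit N

/-- A point or an interval in a linear order. -/
def IsIntervalOrPoint {Δ : Type w} [LinearOrder Δ] (s : Set Δ) : Prop :=
  (∃ a, s = {a}) ∨ (∃ a b, s = Ioo a b) ∨ (∃ a b, s = Ico a b) ∨ (∃ a b, s = Ioc a b) ∨
  (∃ a b, s = Icc a b) ∨ (∃ a, s = Ioi a) ∨ (∃ a, s = Ici a) ∨ (∃ a, s = Iio a) ∨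
  (∃ a, s = Iic a) ∨ s = univ ∨ s = ∅

/-- A linearly ordered structure is o-minimal if every subset definable with parameters
is a finite union of points and intervals. -/
def OMinimal (L : FirstOrder.Language.{u, v}) (Δ : Type w) [LinearOrder Δ] [L.Structure Δ] : Prop :=
  ∀ s : Set Δ, Set.Definable₁ (univ : Set Δ) L s →
    ∃ (n : ℕ) (f : Fin n → Set Δ), (∀ i, IsIntervalOrPoint (f i)) ∧ s = ⋃ i, f i

/-- o-minimality of a subset of a chain (closed under the action and containing `∞`),
as an `L_V`-structure. -/
def OMinimalChainOn (R : Type v) [Ring R] (Δ : Type w) [LinearOrder Δ]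
    (infty : Δ) (act : Δ → R → Δ) (S : Set Δ) : Prop :=
  ∀ (h0 : infty ∈ S) (hcl : ∀ δ ∈ S, ∀ r : R, act δ r ∈ S),
    letI := chainStructureOn R Δ infty act S h0 hcl
    OMinimal (chainLang R) S

/-! ## Valued `R`-modules -/

/-- `(M, Δ, infty, act, v)` is a valued right `R`-module over the skew polynomial ring
`R = K[t;φ]` (with `K` acting through `ι`): `Δ` is an `R`-chain with maximum `infty`
and `v` is a surjective valuation compatible with the action. -/
structure IsValuedRMod (K : Type u) [Field K] (φ : K →+* K) (R : Type v) [Ring R]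
    (ι : K →+* R) (t : R) (M : Type w) [AddCommGroup M] [Module Rᵐᵒᵖ M]
    (Δ : Type x) [LinearOrder Δ] (infty : Δ) (act : Δ → R → Δ) (v : M → Δ) : Prop where
  le_infty : ∀ γ : Δ, γ ≤ infty
  actK_strictMono : ∀ a : K, a ≠ 0 → ∀ γ δ : Δ, γ ≠ infty → δ ≠ infty → δ < γ →
    act δ (ι a) < act γ (ι a)
  actK_mul : ∀ a b : K, a ≠ 0 → b ≠ 0 → ∀ γ : Δ, γ ≠ infty →
    act γ (ι (a * b)) = act (act γ (ι a)) (ι b)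
  actK_expansive : ∀ a : K, a ≠ 0 → ∀ γ δ : Δ, γ ≠ infty → δ ≠ infty →
    γ < act γ (ι a) → δ < act δ (ι a)
  actK_add : ∀ a b : K, ∀ γ : Δ, γ ≠ infty →
    min (act γ (ι a)) (act γ (ι b)) ≤ act γ (ι (a + b))
  actK_sub : ∀ a b : K, ∀ γ : Δ, γ ≠ infty →
    min (act γ (ι a)) (act γ (ι b)) ≤ act γ (ι (a - b))
  act_zero : ∀ γ : Δ, act γ 0 = infty
  act_one : ∀ γ : Δ, act γ 1 = γ
  actK_infty : ∀ b : K, b ≠ 0 → act infty (ι b) = infty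
  act_t_strictMono : ∀ γ δ : Δ, γ ≠ infty → δ ≠ infty → δ < γ → act δ t < act γ t
  act_t_infty : act infty t = infty
  act_t_ne_infty : ∀ γ : Δ, γ ≠ infty → act γ t ≠ infty
  act_ta : ∀ (a : K) (γ : Δ), act γ (t * ι a) = act (act γ t) (ι a)
  act_tpow : ∀ (n : ℕ) (a : K) (γ : Δ),
    act γ (t ^ (n + 1) * ι a) = act (act γ (t ^ n)) (t * ι a)
  act_min : ∀ (c : ℕ →₀ K) (hc : c.support.Nonempty), ∀ γ : Δ, γ ≠ infty →
    act γ (c.sum fun i a => t ^ i * ι a) = c.support.inf' hc fun i => act γ (t ^ i * ι (c i))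
  act_monomial_lt : ∀ (m n : ℕ) (a b : K), a ≠ 0 → b ≠ 0 → n < m → ∀ γ : Δ, γ ≠ infty →
    act γ (t ^ m * ι a) ≤ act γ (t ^ n * ι b) →
    ∀ δ : Δ, δ < γ → act δ (t ^ m * ι a) < act δ (t ^ n * ι b)
  v_surjective : Function.Surjective v
  v_eq_infty_iff : ∀ z : M, v z = infty ↔ z = 0
  v_sub : ∀ z y : M, min (v z) (v y) ≤ v (z - y)
  v_smulK : ∀ (z : M) (a : K), v (rsmul z (ι a)) = act (v z) (ι a)
  v_smul_t : ∀ z : M, v (rsmul z t) = act (v z) t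

/-- The canonical `C`-relation of a valued module (additive convention):
`C(x,y,z) ⟺ v(x−y) = v(x−z) < v(y−z)`. -/
def Crel {M : Type w} [AddCommGroup M] {Δ : Type x} [LinearOrder Δ] (v : M → Δ)
    (a b c : M) : Prop :=
  v (a - b) = v (a - c) ∧ v (a - c) < v (b - c)

/-- `(M,v)` is trivially valued: `v` takes at most two values. -/
def TriviallyValued {M : Type w} [AddCommGroup M] {Δ : Type x} (v : M → Δ) : Prop :=
  ∀ a b : M, a ≠ 0 → b ≠ 0 → v a = v b

/-- `(M,v)` is `K`-trivially valued: `v(x.a) = v(x)` for every `a ∈ K^×`. -/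
def KTriviallyValued {K : Type u} [Field K] {R : Type v} [Ring R] (ι : K →+* R)
    {M : Type w} [AddCommGroup M] [Module Rᵐᵒᵖ M] {Δ : Type x} (v : M → Δ) : Prop :=
  ∀ (z : M) (a : K), a ≠ 0 → v (rsmul z (ι a)) = v z

/-- `M_{>θ} = {x | v(x.t) > v(x)}`. -/
def gtTheta {R : Type v} [Ring R] (t : R) {M : Type w} [AddCommGroup M] [Module Rᵐᵒᵖ M]
    {Δ : Type x} [LinearOrder Δ] (v : M → Δ) : Set M :=
  {z : M | v z < v (rsmul z t)}

/-- `M_{≥θ} = {x | v(x.t) ≥ v(x)}`. -/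
def geTheta {R : Type v} [Ring R] (t : R) {M : Type w} [AddCommGroup M] [Module Rᵐᵒᵖ M]
    {Δ : Type x} [LinearOrder Δ] (v : M → Δ) : Set M :=
  {z : M | v z ≤ v (rsmul z t)}

/-- `(M,v)` is henselian: for every separable `s`, `x ↦ x.s` is a bijection of `M_{>θ}`. -/
def HenselianVM {R : Type v} [Ring R] (t : R) {M : Type w} [AddCommGroup M]
    [Module Rᵐᵒᵖ M] {Δ : Type x} [LinearOrder Δ] (v : M → Δ) : Prop :=
  ∀ s : R, SeparablePoly t s →
    Set.BijOn (fun z : M => rsmul z s) (gtTheta t v) (gtTheta t v)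

/-- `B` is a subset of `S` of finite index (finitely many additive translates of `B`
cover `S`). -/
def HasFiniteIndexIn {M : Type w} [AddCommGroup M] (B S : Set M) : Prop :=
  B ⊆ S ∧ ∃ (n : ℕ) (a : Fin n → M), S ⊆ ⋃ i, (fun b => b + a i) '' B

/-- `S` contains a ball (centered at `0`, of radius `≠ ∞`) of finite index in `S`. -/
def ContainsBallFiniteIndex {M : Type w} [AddCommGroup M] {Δ : Type x} [LinearOrder Δ]
    (v : M → Δ) (infty : Δ) (S : Set M) : Prop :=
  ∃ γ : Δ, γ ≠ infty ∧
    (HasFiniteIndexIn {z : M | γ ≤ v z} S ∨ HasFiniteIndexIn {z : M | γ < v z} S)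

/-- `(M,v)` is residually divisible and affinely maximal: for every nonzero `r ∈ R` and
`z ∈ M` there is `y` with `y.r = z` and `v(y.r) = v(y)·r`. -/
def ResDivAffMax {R : Type v} [Ring R] {M : Type w} [AddCommGroup M] [Module Rᵐᵒᵖ M]
    {Δ : Type x} (act : Δ → R → Δ) (v : M → Δ) : Prop :=
  ∀ r : R, r ≠ 0 → ∀ z : M, ∃ y : M, rsmul y r = z ∧ v (rsmul y r) = act (v y) r

/-! ## Valued fields as valued modules -/

/-- The valuation ring of a (multiplicative Krull) valuation. -/
def ValRing {F : Type u} {Γ₀ : Type v} [Field F] [LinearOrderedCommGroupWithZero Γ₀]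
    (v : Valuation F Γ₀) : Set F :=
  {z : F | v z ≤ 1}

/-- The canonical `C`-relation of a (multiplicatively written) valued field:
in additive notation, `C(x,y,z) ⟺ v(x−y) = v(x−z) < v(y−z)`. -/
def valC {F : Type u} {Γ₀ : Type v} [Field F] [LinearOrderedCommGroupWithZero Γ₀]
    (v : Valuation F Γ₀) (a b c : F) : Prop :=
  v (a - b) = v (a - c) ∧ v (b - c) < v (a - c)

/-- A valuation is henselian (Newton–Hensel approximation property on the valuation
ring). -/
def HenselianValuation {F : Type u} {Γ₀ : Type v} [Field F]
    [LinearOrderedCommGroupWithZero Γ₀] (v : Valuation F Γ₀) : Prop :=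
  ∀ P : Polynomial F, (∀ i, v (P.coeff i) ≤ 1) → ∀ a : F, v a ≤ 1 →
    v (P.eval a) < v (P.derivative.eval a) ^ 2 →
    ∃ b : F, v b ≤ 1 ∧ P.eval b = 0 ∧ v (b - a) < v (P.derivative.eval a)

/-- The residue field of `v` is finite. -/
def FiniteResidueField {F : Type u} {Γ₀ : Type v} [Field F]
    [LinearOrderedCommGroupWithZero Γ₀] (v : Valuation F Γ₀) : Prop :=
  ∃ n : ℕ, ∀ z : Fin (n + 1) → F, (∀ i, v (z i) ≤ 1) →
    ∃ i j, i ≠ j ∧ v (z i - z j) < 1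

/-- The residue field of `v` is `p`-closed: every nonzero additive polynomial
`∑ aᵢ X^{pⁱ}` over the residue field is surjective. -/
def PClosedResidue (p : ℕ) {F : Type u} {Γ₀ : Type v} [Field F]
    [LinearOrderedCommGroupWithZero Γ₀] (v : Valuation F Γ₀) : Prop :=
  ∀ (d : ℕ) (a : Fin (d + 1) → F), (∀ i, v (a i) ≤ 1) → (∃ i, v (a i) = 1) →
    ∀ z : F, v z ≤ 1 → ∃ y : F, v y ≤ 1 ∧ v ((∑ i, a i * y ^ p ^ (i : ℕ)) - z) < 1

/-- A field `k` of characteristic `p` is `p`-closed: every nonzero additive polynomial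
with coefficients in `k` is surjective on `k`. -/
def PClosedField (p : ℕ) (k : Type u) [Field k] : Prop :=
  ∀ (d : ℕ) (a : Fin (d + 1) → k), (∃ i, a i ≠ 0) →
    Function.Surjective fun z : k => ∑ i, a i * z ^ p ^ (i : ℕ)

/-- The value group of `v` is divisible. -/
def DivisibleValueGroup {F : Type u} {Γ₀ : Type v} [Field F]
    [LinearOrderedCommGroupWithZero Γ₀] (v : Valuation F Γ₀) : Prop :=
  ∀ z : F, z ≠ 0 → ∀ n : ℕ, 0 < n → ∃ y : F, y ≠ 0 ∧ v y ^ n = v z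

/-- `(F,v)` is algebraically maximal: it has no proper immediate algebraic extension. -/
def AlgebraicallyMaximal {F : Type u} {Γ₀ : Type v} [Field F]
    [LinearOrderedCommGroupWithZero Γ₀] (v : Valuation F Γ₀) : Prop :=
  ∀ (L : Type u) [Field L] [Algebra F L], Algebra.IsAlgebraic F L →
    ∀ w : Valuation L Γ₀,
      (∀ z : F, w (algebraMap F L z) = v z) →
      (∀ z : L, ∃ y : F, w z = v y) →
      (∀ z : L, w z ≤ 1 → ∃ y : F, w (z - algebraMap F L y) < 1) →
      Function.Surjective (algebraMap F L)

/-! ## Puiseux series -/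

/-- The set of Puiseux series over `k`, inside the Hahn series field `k((ℚ))`:
series whose support is contained in `(1/n)ℤ` for some `n ≥ 1`. -/
def PuiseuxSet (k : Type u) [Field k] : Set (HahnSeries ℚ k) :=
  {f | ∃ n : ℕ, 0 < n ∧ ∀ q ∈ f.support, ∃ m : ℤ, q = (m : ℚ) / (n : ℚ)}

/-- The ring of Puiseux series over `k`: the valuation ring of the field of Puiseux
series. -/
def PuiseuxValRing (k : Type u) [Field k] : Set (HahnSeries ℚ k) :=
  {f | f ∈ PuiseuxSet k ∧ ∀ q ∈ f.support, 0 ≤ q}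

/-- The canonical `C`-relation on Hahn series over `ℚ`, induced by the order valuation
(additive convention). -/
def hahnC {k : Type u} [Field k] (a b c : HahnSeries ℚ k) : Prop :=
  (a - b).orderTop = (a - c).orderTop ∧ (a - c).orderTop < (b - c).orderTop

/-! ### Auxiliary lemmas for the proof -/

private lemma cLang_term_eq_var {β : Type*} (τ : cLang.Term β) : ∃ u, τ = Term.var u := by
  cases τ with
  | var u => exact ⟨u, rfl⟩
  | func f ts => exact PEmpty.elim f

private lemma qf_invariant {M : Type w} [AddCommGroup M] {Δ : Type x} (v : M → Δ)
    [inst : cLang.Structure M] (C : M → M → M → Prop)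
    (hRel : ∀ xx : Fin 3 → M,
      Structure.RelMap (L := cLang) (n := 3) (PUnit.unit : cLang.Relations 3) xx ↔ C (xx 0) (xx 1) (xx 2))
    (hC : ∀ a b d a' b' d' : M, v (a - b) = v (a' - b') → v (a - d) = v (a' - d') →
      v (b - d) = v (b' - d') → (C a b d ↔ C a' b' d'))
    (hE : ∀ a b a' b' : M, v (a - b) = v (a' - b') → (a = b ↔ a' = b'))
    {α : Type*} {n : ℕ} {φ : cLang.BoundedFormula α n} (hφ : φ.IsQF)
    (f g : α → M) (xs ys : Fin n → M)
    (h : ∀ u u' : α ⊕ Fin n, v (Sum.elim f xs u - Sum.elim f xs u') =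
      v (Sum.elim g ys u - Sum.elim g ys u')) :
    φ.Realize f xs ↔ φ.Realize g ys := by
  induction hφ with
  | falsum => exact Iff.rfl
  | of_isAtomic hA =>
    cases hA with
    | equal t₁ t₂ =>
      obtain ⟨u₁, rfl⟩ := cLang_term_eq_var t₁
      obtain ⟨u₂, rfl⟩ := cLang_term_eq_var t₂
      simpa using hE _ _ _ _ (h u₁ u₂)
    | @rel l R ts =>
      match l, R with
      | 0, R => exact PEmpty.elim R
      | 1, R => exact PEmpty.elim R
      | 2, R => exact PEmpty.elim R
      | (l + 4), R => exact PEmpty.elim R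
      | 3, R =>
        obtain ⟨u₀, h₀⟩ := cLang_term_eq_var (ts 0)
        obtain ⟨u₁, h₁⟩ := cLang_term_eq_var (ts 1)
        obtain ⟨u₂, h₂⟩ := cLang_term_eq_var (ts 2)
        cases R
        erw [BoundedFormula.realize_rel, BoundedFormula.realize_rel]
        rw [hRel, hRel]
        rw [h₀, h₁, h₂]
        simp only [Term.realize_var]
        exact hC _ _ _ _ _ _ (h u₀ u₁) (h u₀ u₂) (h u₁ u₂)
  | imp h₁ h₂ ih₁ ih₂ =>
    simp only [BoundedFormula.realize_imp, ih₁, ih₂]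

private lemma definable_T (R : Type v) [Ring R] (M : Type w) [AddCommGroup M] [Module Rᵐᵒᵖ M]
    (C : M → M → M → Prop) (t s : R) (y : M) :
    letI := cModStructure R M C
    Set.Definable₁ (univ : Set M) (cModLang R)
      {a : M | ∃ z : M, (z = 0 ∨ C z (rsmul z t) 0) ∧ a = y + rsmul z s} := by
  letI := cModStructure R M C
  rw [Set.Definable₁, Set.definable_iff_exists_formula_sum]
  set α := ((univ : Set M) ⊕ Fin 1) with hα
  let L := cModLang R
  let tz : L.Term (α ⊕ Fin 1) := Term.func (l := 0) PUnit.unit ![]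
  let tX : L.Term (α ⊕ Fin 1) := Term.var (Sum.inr 0)
  let tA : L.Term (α ⊕ Fin 1) := Term.var (Sum.inl (Sum.inr 0))
  let tY : L.Term (α ⊕ Fin 1) := Term.var (Sum.inl (Sum.inl ⟨y, Set.mem_univ y⟩))
  let tXt : L.Term (α ⊕ Fin 1) := Term.func (l := 1) (some t) ![tX]
  let tXs : L.Term (α ⊕ Fin 1) := Term.func (l := 1) (some s) ![tX]
  let tsum : L.Term (α ⊕ Fin 1) := Term.func (l := 2) PUnit.unit ![tY, tXs]
  let ψ : L.BoundedFormula α 1 :=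
    ((Term.bdEqual tX tz) ⊔
      (Relations.boundedFormula (n := 3) PUnit.unit ![tX, tXt, tz])) ⊓ (Term.bdEqual tA tsum)
  refine ⟨BoundedFormula.ex ψ, ?_⟩
  ext xrow
  simp only [mem_setOf_eq, Formula.Realize, BoundedFormula.realize_ex,
    BoundedFormula.realize_inf, BoundedFormula.realize_sup, BoundedFormula.realize_bdEqual,
    BoundedFormula.realize_rel, Term.realize_var, Term.realize_func, ψ, tz, tX, tA, tY, tXt,
    tXs, tsum]
  have hfun0 : ∀ (xx : Fin 0 → M),
      Structure.funMap (L := cModLang R) (n := 0) (PUnit.unit : (cModLang R).Functions 0) xx = 0 :=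
    fun _ => rfl
  have hfun1 : ∀ (r : R) (xx : Fin 1 → M),
      Structure.funMap (L := cModLang R) (n := 1) (some r : (cModLang R).Functions 1) xx
        = rsmul (xx 0) r := fun _ _ => rfl
  have hfun2 : ∀ (xx : Fin 2 → M),
      Structure.funMap (L := cModLang R) (n := 2) (PUnit.unit : (cModLang R).Functions 2) xx
        = xx 0 + xx 1 := fun _ => rfl
  have hrel3 : ∀ (xx : Fin 3 → M),
      Structure.RelMap (L := cModLang R) (n := 3) (PUnit.unit : (cModLang R).Relations 3) xx
        = C (xx 0) (xx 1) (xx 2) := fun _ => rfl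
  have hsnoc : ∀ a : M, (Fin.snoc (default : Fin 0 → M) a : Fin 1 → M) = fun _ => a := by
    intro a; funext i; fin_cases i; simp [Fin.snoc]
  simp only [hfun0, hfun1, hfun2, hrel3, Term.realize_var, Term.realize_func,
    Matrix.cons_val_zero, Matrix.cons_val_one, Matrix.head_cons, Matrix.cons_val_two,
    Matrix.tail_cons, Sum.elim_inl, Sum.elim_inr, Matrix.cons_val_fin_one, hsnoc]
  exact Iff.rfl

/-- every `K`-trivially valued `C`-minimal `R`-module is henselian. -/
theorem stmt_14 (K : Type u) [Field K] (φ : K →+* K) (R : Type v) [Ring R]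
    (ι : K →+* R) (t : R) (hR : IsSkewPolyRing K φ R ι t)
    (M : Type w) [AddCommGroup M] [Module Rᵐᵒᵖ M]
    (Δ : Type x) [LinearOrder Δ] (infty : Δ) (act : Δ → R → Δ) (v : M → Δ)
    (hV : IsValuedRMod K φ R ι t M Δ infty act v)
    (hKtriv : KTriviallyValued ι v)
    (hcmin : @CMinimal (cModLang R) PUnit.unit M (cModStructure R M (Crel v))) :
    HenselianVM t v := by
  classical
  -- basic valuation facts
  have hv0 : v 0 = infty := (hV.v_eq_infty_iff 0).mpr rfl
  have hne : ∀ z : M, z ≠ 0 → v z ≠ infty := fun z hz h => hz ((hV.v_eq_infty_iff z).mp h)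
  have hlt_infty : ∀ γ : Δ, γ ≠ infty → γ < infty := fun γ h => (hV.le_infty γ).lt_of_ne h
  have hvneg : ∀ z : M, v (-z) = v z := by
    intro z
    have h1 : rsmul z (ι (-1 : K)) = -z := by
      show MulOpposite.op (ι (-1 : K)) • z = -z
      rw [map_neg, map_one, MulOpposite.op_neg, MulOpposite.op_one, neg_smul, one_smul]
    have h2 := hKtriv z (-1) (by norm_num)
    rw [h1] at h2; exact h2
  have hvadd : ∀ z w : M, min (v z) (v w) ≤ v (z + w) := by
    intro z w
    have h1 := hV.v_sub z (-w)
    rwa [sub_neg_eq_add, hvneg] at h1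
  have hvsub_left : ∀ z w : M, v z < v w → v (z - w) = v z := by
    intro z w h
    have h1 : v z ≤ v (z - w) := by
      have h2 := hV.v_sub z w; rwa [min_eq_left h.le] at h2
    rcases h1.lt_or_eq with h2 | h2
    · exfalso
      have h3 : min (v (z - w)) (v w) ≤ v z := by
        have h4 := hvadd (z - w) w; rwa [sub_add_cancel] at h4
      exact absurd (lt_of_lt_of_le (lt_min h2 h) h3) (lt_irrefl _)
    · exact h2.symm
  have hvsub_right : ∀ z w : M, v w < v z → v (z - w) = v w := by
    intro z w h
    have h1 : z - w = -(w - z) := by abel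
    rw [h1, hvneg, hvsub_left w z h]
  have hvadd_left : ∀ z w : M, v z < v w → v (z + w) = v z := by
    intro z w h
    have h1 : z + w = z - (-w) := by abel
    rw [h1, hvsub_left z (-w) (by rwa [hvneg])]
  have hvadd_right : ∀ z w : M, v w < v z → v (z + w) = v w := by
    intro z w h; rw [add_comm]; exact hvadd_left w z h
  -- the set D of values above the cut θ
  set D : Set Δ := {γ | γ < act γ t} with hDdef
  have hD_ne_infty : ∀ γ ∈ D, γ ≠ infty := by
    intro γ hγ h
    have hγ' : γ < act γ t := hγ
    rw [h] at hγ'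
    rw [show act infty t = infty from hV.act_t_infty] at hγ'
    exact absurd hγ' (lt_irrefl _)
  have hact_id : ∀ (a : K), a ≠ 0 → ∀ γ : Δ, act γ (ι a) = γ := by
    intro a ha γ
    by_cases h : γ = infty
    · rw [h]; exact hV.actK_infty a ha
    · obtain ⟨z, rfl⟩ := hV.v_surjective γ
      rw [← hV.v_smulK z a, hKtriv z a ha]
  have hD_up : ∀ γ ∈ D, ∀ δ : Δ, γ ≤ δ → δ ≠ infty → δ ∈ D := by
    intro γ hγ δ hle hδ
    rcases hle.lt_or_eq with hlt | heq
    · by_contra hnd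
      have hnd' : act δ t ≤ δ := not_lt.mp hnd
      have hle2 : act δ (t ^ 1 * ι (1:K)) ≤ act δ (t ^ 0 * ι (1:K)) := by
        rw [pow_one, pow_zero, one_mul, hV.act_ta, hact_id 1 one_ne_zero, hact_id 1 one_ne_zero]
        exact hnd'
      have h5 := hV.act_monomial_lt 1 0 1 1 one_ne_zero one_ne_zero zero_lt_one δ hδ hle2 γ hlt
      rw [pow_one, pow_zero, one_mul, hV.act_ta, hact_id 1 one_ne_zero,
        hact_id 1 one_ne_zero] at h5
      exact absurd h5 (not_lt.mpr (le_of_lt hγ))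
    · rw [← heq]; exact hγ
  have hD_t : ∀ γ ∈ D, act γ t ∈ D := by
    intro γ hγ
    have hγi := hD_ne_infty γ hγ
    exact hV.act_t_strictMono (act γ t) γ (hV.act_t_ne_infty γ hγi) hγi hγ
  -- iterates of the action of t
  set AT : Δ → Δ := fun γ => act γ t with hAT
  have hATpow : ∀ (i : ℕ) (z : M), v ((MulOpposite.op t) ^ i • z) = AT^[i] (v z) := by
    intro i
    induction i with
    | zero => intro z; simp
    | succ n ih =>
      intro z
      rw [pow_succ, mul_smul, ih, Function.iterate_succ_apply]
      congr 1
      exact hV.v_smul_t z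
  have hD_iter : ∀ (i : ℕ) (γ : Δ), γ ∈ D → AT^[i] γ ∈ D := by
    intro i
    induction i with
    | zero => intro γ h; simpa using h
    | succ n ih =>
      intro γ h
      rw [Function.iterate_succ_apply]
      exact ih _ (hD_t γ h)
  have hD_lt_iter : ∀ (i : ℕ) (γ : Δ), γ ∈ D → γ < AT^[i + 1] γ := by
    intro i
    induction i with
    | zero => intro γ h; exact h
    | succ n ih =>
      intro γ h
      refine lt_trans (ih γ h) ?_
      rw [Function.iterate_succ_apply' AT (n + 1) γ]
      exact hD_iter (n + 1) γ h
  -- start of the main proof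
  intro s hsep
  obtain ⟨c, hc, -⟩ := hR.unique_rep s
  have ha0 : c 0 ≠ 0 := by
    intro h0
    apply hsep
    refine ⟨c.sum fun i a => t ^ (i - 1) * ι a, ?_⟩
    rw [hc, Finsupp.sum, Finsupp.sum, Finset.mul_sum]
    refine Finset.sum_congr rfl fun i hi => ?_
    have hi0 : i ≠ 0 := by rintro rfl; exact (Finsupp.mem_support_iff.mp hi) h0
    rw [← mul_assoc]
    congr 1
    rw [← pow_succ', Nat.sub_add_cancel (Nat.one_le_iff_ne_zero.mpr hi0)]
  have hterm : ∀ (i : ℕ) (a : K), a ≠ 0 → ∀ z : M,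
      v (MulOpposite.op (t ^ i * ι a) • z) = AT^[i] (v z) := by
    intro i a ha z
    rw [MulOpposite.op_mul, mul_smul]
    have h1 := hKtriv ((MulOpposite.op (t ^ i)) • z) a ha
    rw [h1, MulOpposite.op_pow, hATpow]
  have hsum_gt : ∀ (S : Finset ℕ) (F : ℕ → M) (γ : Δ), γ ≠ infty →
      (∀ i ∈ S, γ < v (F i)) → γ < v (∑ i ∈ S, F i) := by
    intro S
    induction S using Finset.induction with
    | empty => intro F γ hγ _; rw [Finset.sum_empty, hv0]; exact hlt_infty γ hγ
    | @insert j S hni ih =>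
      intro F γ hγ hall
      rw [Finset.sum_insert hni]
      have h1 : γ < v (F j) := hall _ (Finset.mem_insert_self _ _)
      have h2 := ih F γ hγ (fun i hi => hall i (Finset.mem_insert_of_mem hi))
      exact lt_of_lt_of_le (lt_min h1 h2) (hvadd _ _)
  have h0mem : (0:ℕ) ∈ c.support := Finsupp.mem_support_iff.mpr ha0
  have hdecomp : ∀ z : M, MulOpposite.op s • z =
      MulOpposite.op ((t:R) ^ 0 * ι (c 0)) • z
        + ∑ i ∈ c.support.erase 0, MulOpposite.op ((t:R) ^ i * ι (c i)) • z := by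
    intro z
    conv_lhs => rw [hc]
    rw [Finsupp.sum, Finset.op_sum, Finset.sum_smul, ← Finset.add_sum_erase _ _ h0mem]
  have hrest_gt : ∀ z : M, v z ∈ D →
      v z < v (∑ i ∈ c.support.erase 0, MulOpposite.op ((t:R) ^ i * ι (c i)) • z) := by
    intro z hz
    refine hsum_gt _ _ _ (hD_ne_infty _ hz) fun i hi => ?_
    have hi0 : i ≠ 0 := Finset.ne_of_mem_erase hi
    have hci : c i ≠ 0 := Finsupp.mem_support_iff.mp (Finset.mem_of_mem_erase hi)
    rw [hterm i (c i) hci z]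
    obtain ⟨j, rfl⟩ : ∃ j, i = j + 1 :=
      ⟨i - 1, (Nat.succ_pred_eq_of_pos (Nat.pos_of_ne_zero hi0)).symm⟩
    exact hD_lt_iter j (v z) hz
  have hvs : ∀ z : M, v z ∈ D → v (MulOpposite.op s • z) = v z := by
    intro z hz
    rw [hdecomp z]
    have h0 : v (MulOpposite.op ((t:R) ^ 0 * ι (c 0)) • z) = v z := by
      rw [hterm 0 (c 0) ha0 z]; simp
    rw [hvadd_left _ _ (by rw [h0]; exact hrest_gt z hz), h0]
  have hmemD : ∀ z : M, z ∈ gtTheta t v ↔ v z ∈ D := by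
    intro z
    show v z < v (rsmul z t) ↔ v z < act (v z) t
    rw [hV.v_smul_t]
  -- G0 : the subgroup of elements with value in D, together with 0
  set G0 : Set M := {z | z = 0 ∨ v z ∈ D} with hG0def
  have hG0neg : ∀ z ∈ G0, -z ∈ G0 := by
    rintro z (rfl | hz)
    · rw [neg_zero]; exact Or.inl rfl
    · exact Or.inr (by rwa [hvneg])
  have hG0sub : ∀ z w : M, z ∈ G0 → w ∈ G0 → z - w ∈ G0 := by
    rintro z w (rfl | hz) (rfl | hw)
    · rw [sub_zero]; exact Or.inl rfl
    · rw [zero_sub]; exact Or.inr (by rwa [hvneg])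
    · rw [sub_zero]; exact Or.inr hz
    · by_cases hzw : z = w
      · subst hzw; rw [sub_self]; exact Or.inl rfl
      · right
        have hmin := hV.v_sub z w
        have hninf : v (z - w) ≠ infty := hne _ (sub_ne_zero_of_ne hzw)
        rcases le_total (v z) (v w) with hle | hle
        · exact hD_up (v z) hz _ (by rwa [min_eq_left hle] at hmin) hninf
        · exact hD_up (v w) hw _ (by rwa [min_eq_right hle] at hmin) hninf
  refine ⟨?_, ?_, ?_⟩
  · -- MapsTo
    intro z hz
    rw [hmemD] at hz ⊢
    show v (MulOpposite.op s • z) ∈ D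
    rw [hvs z hz]; exact hz
  · -- InjOn
    intro z hz w hw he
    by_contra hne'
    have hzD : v z ∈ D := (hmemD z).mp hz
    have hwD : v w ∈ D := (hmemD w).mp hw
    have hzw : v (z - w) ∈ D := by
      rcases hG0sub z w (Or.inr hzD) (Or.inr hwD) with h0 | h1
      · exact absurd (sub_eq_zero.mp h0) hne'
      · exact h1
    have h2 : v (MulOpposite.op s • (z - w)) = v (z - w) := hvs _ hzw
    have he' : rsmul z s = rsmul w s := he
    have h3 : MulOpposite.op s • (z - w) = 0 := by
      rw [smul_sub]
      show rsmul z s - rsmul w s = 0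
      rw [he']; exact sub_self _
    rw [h3, hv0] at h2
    exact hD_ne_infty _ hzw h2.symm
  · -- SurjOn
    intro y hy
    by_contra hyim
    have hyD : v y ∈ D := (hmemD y).mp hy
    -- the image subgroup H and the coset T = y + H
    set H : Set M := {b | ∃ z ∈ G0, MulOpposite.op s • z = b} with hHdef
    have hH0 : (0:M) ∈ H := ⟨0, Or.inl rfl, smul_zero _⟩
    have hyH : y ∉ H := by
      rintro ⟨z, hz, he⟩
      rcases hz with rfl | hz
      · rw [smul_zero] at he
        exact hD_ne_infty _ hyD (by rw [← he, hv0])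
      · exact hyim ⟨z, (hmemD z).mpr hz, he⟩
    set T : Set M := {a | ∃ z : M, (z = 0 ∨ Crel v z (rsmul z t) 0) ∧ a = y + rsmul z s}
      with hTdef
    have hCrel_iff : ∀ z : M, Crel v z (rsmul z t) 0 ↔ v z ∈ D := by
      intro z
      unfold Crel
      rw [sub_zero, sub_zero, hV.v_smul_t]
      constructor
      · rintro ⟨-, h2⟩; exact h2
      · intro h
        refine ⟨?_, h⟩
        rw [hvsub_left z _ (by rw [hV.v_smul_t]; exact h)]
    have hT_iff : ∀ a : M, a ∈ T ↔ ∃ z ∈ G0, a = y + MulOpposite.op s • z := by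
      intro a
      constructor
      · rintro ⟨z, hz, rfl⟩
        refine ⟨z, ?_, rfl⟩
        rcases hz with h | h
        · exact Or.inl h
        · exact Or.inr ((hCrel_iff z).mp h)
      · rintro ⟨z, hz, rfl⟩
        refine ⟨z, ?_, rfl⟩
        rcases hz with h | h
        · exact Or.inl h
        · exact Or.inr ((hCrel_iff z).mpr h)
    have hTy : y ∈ T := ⟨0, Or.inl rfl, by rw [show rsmul (0:M) s = 0 from smul_zero _, add_zero]⟩
    have hT0 : (0:M) ∉ T := by
      intro h0
      obtain ⟨z, hz, he⟩ := (hT_iff 0).mp h0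
      apply hyH
      refine ⟨-z, hG0neg z hz, ?_⟩
      rw [smul_neg]
      rw [eq_comm, ← neg_eq_iff_add_eq_zero] at he
      rw [← he, neg_neg]
    have hTHdisj : ∀ a ∈ T, a ∉ H := by
      intro a ha hA
      obtain ⟨z1, hz1, rfl⟩ := (hT_iff a).mp ha
      obtain ⟨z2, hz2, he2⟩ := hA
      apply hyH
      refine ⟨z2 - z1, hG0sub _ _ hz2 hz1, ?_⟩
      rw [smul_sub, he2]
      abel
    have hT_subH : ∀ a ∈ T, ∀ b ∈ H, a - b ∈ T := by
      intro a ha b hb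
      obtain ⟨z1, hz1, rfl⟩ := (hT_iff a).mp ha
      obtain ⟨z2, hz2, rfl⟩ := hb
      rw [hT_iff]
      refine ⟨z1 - z2, hG0sub _ _ hz1 hz2, ?_⟩
      rw [smul_sub]
      abel
    have hG0s : ∀ z ∈ G0, MulOpposite.op s • z ∈ G0 := by
      rintro z (rfl | hz)
      · rw [smul_zero]; exact Or.inl rfl
      · exact Or.inr (by rw [hvs z hz]; exact hz)
    have hTD : ∀ a ∈ T, v a ∈ D := by
      intro a ha
      obtain ⟨z, hz, rfl⟩ := (hT_iff a).mp ha
      have hXG' : -(MulOpposite.op s • z) ∈ G0 := hG0neg _ (hG0s z hz)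
      have h1 := hG0sub y _ (Or.inr hyD) hXG'
      rw [sub_neg_eq_add] at h1
      rcases h1 with h0 | hD'
      · exact absurd (h0 ▸ ha) hT0
      · exact hD'
    have hTstep : ∀ w ∈ T, ∃ w' ∈ T, v w < v w' := by
      intro w hw
      have hwD : v w ∈ D := hTD w hw
      have hinv0 : (c 0)⁻¹ ≠ 0 := inv_ne_zero ha0
      set xw : M := MulOpposite.op (ι (c 0)⁻¹) • w with hxw
      have hvxw : v xw = v w := hKtriv w _ hinv0
      have hxwD : v xw ∈ D := by rw [hvxw]; exact hwD
      have hterm0 : MulOpposite.op ((t:R) ^ 0 * ι (c 0)) • xw = w := by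
        rw [pow_zero, one_mul, hxw, ← mul_smul, ← MulOpposite.op_mul, ← map_mul,
          inv_mul_cancel₀ ha0, map_one, MulOpposite.op_one, one_smul]
      have hw' : w - MulOpposite.op s • xw ∈ T :=
        hT_subH w hw _ ⟨xw, Or.inr hxwD, rfl⟩
      refine ⟨w - MulOpposite.op s • xw, hw', ?_⟩
      rw [hdecomp xw, hterm0, sub_add_cancel_left, hvneg]
      have h1 := hrest_gt xw hxwD
      rwa [hvxw] at h1
    -- apply C-minimality
    letI instM : (cModLang R).Structure M := cModStructure R M (Crel v)
    have hdef := definable_T R M (Crel v) t s y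
    have hqfc := hcmin M rfl T hdef
    obtain ⟨k, φ, cs, hφqf, hTeq⟩ := hqfc
    have hinv : ∀ a b : M, (∀ i : Fin k, v (a - cs i) = v (b - cs i)) → (a ∈ T ↔ b ∈ T) := by
      intro a b hab
      rw [hTeq]
      simp only [Set.mem_setOf_eq]
      letI instq : cLang.Structure M := cRelStructure M fun a b d =>
        Structure.RelMap (L := cModLang R) (n := 3) (PUnit.unit : (cModLang R).Relations 3) ![a, b, d]
      refine qf_invariant (inst := instq) v (Crel v) (fun xx => Iff.rfl) ?_ ?_ hφqf
        _ _ default default ?_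
      · intro a' b' d' a'' b'' d'' h1 h2 h3
        unfold Crel
        rw [h1, h2, h3]
      · intro a' b' a'' b'' h1
        rw [← sub_eq_zero, ← sub_eq_zero (a := a''), ← hV.v_eq_infty_iff, ← hV.v_eq_infty_iff,
          h1]
      · intro u u'
        rcases u with u | u0
        · rcases u' with u' | u0
          · rcases u with i | i1
            · rcases u' with j | j1
              · rfl
              · show v (cs i - a) = v (cs i - b)
                rw [show cs i - a = -(a - cs i) by abel, hvneg,
                  show cs i - b = -(b - cs i) by abel, hvneg]
                exact hab i
            · rcases u' with j | j1
              · exact hab j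
              · show v (a - a) = v (b - b)
                rw [sub_self, sub_self]
          · exact Fin.elim0 u0
        · exact Fin.elim0 u0
    -- classification of the parameters
    set PL : Set (Fin k) := {i | ∀ w ∈ T, v w ≤ v (w - cs i)} with hPLdef
    have hFar1 : ∀ i : Fin k, i ∉ PL → ∃ wh, wh ∈ T ∧ v (wh - cs i) < v wh := by
      intro i hi
      simp only [hPLdef, Set.mem_setOf_eq, not_forall, not_le] at hi
      obtain ⟨wh, hwh, hlt⟩ := hi
      exact ⟨wh, hwh, hlt⟩
    choose! wh hwhT hwhlt using hFar1
    set whT : Fin k → M := fun i => if i ∈ PL then y else wh i with hwhTdef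
    have hwhT_mem : ∀ i, whT i ∈ T := by
      intro i
      by_cases h : i ∈ PL
      · simp only [hwhTdef, if_pos h]; exact hTy
      · simp only [hwhTdef, if_neg h]; exact hwhT i h
    have hwhT_eq : ∀ i ∉ PL, whT i = wh i := by
      intro i hi; simp only [hwhTdef, if_neg hi]
    have hdom : ∀ l : List M, (∀ z ∈ l, z ∈ T) → ∃ w ∈ T, ∀ z ∈ l, v z < v w := by
      intro l
      induction l with
      | nil => intro _; exact ⟨y, hTy, by simp⟩
      | cons z l ih =>
        intro hall
        obtain ⟨w, hwT, hw⟩ := ih fun z' hz' => hall z' (List.mem_cons_of_mem _ hz')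
        have hzT := hall z List.mem_cons_self
        rcases le_total (v z) (v w) with hle | hle
        · obtain ⟨w', hw'T, hww'⟩ := hTstep w hwT
          refine ⟨w', hw'T, fun z' hz' => ?_⟩
          rcases List.mem_cons.mp hz' with rfl | hm
          · exact lt_of_le_of_lt hle hww'
          · exact (hw z' hm).trans hww'
        · obtain ⟨w', hw'T, hww'⟩ := hTstep z hzT
          refine ⟨w', hw'T, fun z' hz' => ?_⟩
          rcases List.mem_cons.mp hz' with rfl | hm
          · exact hww'
          · exact lt_of_lt_of_le (hw z' hm) (hle.trans hww'.le)
    obtain ⟨wd, hwdT, hwdgt'⟩ := hdom ((List.finRange k).map whT) (by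
      intro z hz
      rw [List.mem_map] at hz
      obtain ⟨i, -, rfl⟩ := hz
      exact hwhT_mem i)
    have hwdgt : ∀ i : Fin k, v (whT i) < v wd := fun i =>
      hwdgt' _ (List.mem_map_of_mem (List.mem_finRange i))
    have hγD : v wd ∈ D := hTD wd hwdT
    obtain ⟨w', hw'T, hw'gt⟩ := hTstep wd hwdT
    -- frozen parameters
    have hcsF : ∀ i : Fin k, i ∉ PL → v (cs i) = v (wh i - cs i) ∧ v (cs i) < v (wh i) := by
      intro i hi
      have h1 := hwhlt i hi
      have h2 : v (cs i) = v (wh i - cs i) := by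
        have h3 := hvsub_right (wh i) (wh i - cs i) h1
        rwa [sub_sub_cancel] at h3
      exact ⟨h2, h2 ▸ h1⟩
    have hFfreeze : ∀ i ∉ PL, ∀ w ∈ T, v (wh i) < v w → v (w - cs i) = v (cs i) := by
      intro i hi w hw hgt
      have h1 := hwhlt i hi
      have heq : w - cs i = (w - wh i) + (wh i - cs i) := by abel
      have h2 : v (wh i) ≤ v (w - wh i) := by
        have h3 := hV.v_sub w (wh i)
        rwa [min_eq_right hgt.le] at h3
      rw [heq, hvadd_right _ _ (lt_of_lt_of_le h1 h2)]
      exact (hcsF i hi).1.symm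
    have hτwd_F : ∀ i ∉ PL, v (wd - cs i) = v (cs i) := by
      intro i hi
      refine hFfreeze i hi wd hwdT ?_
      have h1 := hwdgt i
      rwa [hwhT_eq i hi] at h1
    have hlt_cs_γ : ∀ i ∉ PL, v (cs i) < v wd := by
      intro i hi
      refine lt_trans (hcsF i hi).2 ?_
      have h1 := hwdgt i
      rwa [hwhT_eq i hi] at h1
    -- pseudo-limit parameters
    have hPLexact : ∀ i ∈ PL, ∀ w ∈ T, v (w - cs i) = v w := by
      intro i hi w hw
      obtain ⟨w2, hw2T, hw2⟩ := hTstep w hw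
      have heq : w - cs i = (w - w2) + (w2 - cs i) := by abel
      rw [heq, hvadd_left]
      · exact hvsub_left w w2 hw2
      · rw [hvsub_left w w2 hw2]
        exact lt_of_lt_of_le hw2 (hi w2 hw2T)
    have hPLhigh : ∀ i ∈ PL, ∀ w ∈ T, v w ≤ v (cs i) := by
      intro i hi w hw
      have h1 := hV.v_sub w (w - cs i)
      rw [sub_sub_cancel, hPLexact i hi w hw, min_self] at h1
      exact h1
    have hPLpair : ∀ i ∈ PL, ∀ j ∈ PL, ∀ w ∈ T, v w ≤ v (cs i - cs j) := by
      intro i hi j hj w hw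
      have heq : cs i - cs j = (w - cs j) - (w - cs i) := by abel
      rw [heq]
      have h1 := hV.v_sub (w - cs j) (w - cs i)
      rwa [hPLexact j hj w hw, hPLexact i hi w hw, min_self] at h1
    have hPLnotT : ∀ i ∈ PL, cs i ∉ T := by
      intro i hi hmem
      have h1 := hPLexact i hi (cs i) hmem
      rw [sub_self, hv0] at h1
      have h2 : cs i = 0 := (hV.v_eq_infty_iff _).mp h1.symm
      rw [h2] at hmem
      exact hT0 hmem
    -- an element of H of value γ = v wd
    obtain ⟨z0, hz0⟩ := hV.v_surjective (v wd)
    have hz0D : v z0 ∈ D := by rw [hz0]; exact hγD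
    have hhH : MulOpposite.op s • z0 ∈ H := ⟨z0, Or.inr hz0D, rfl⟩
    have hvh : v (MulOpposite.op s • z0) = v wd := by rw [hvs z0 hz0D, hz0]
    by_cases hPLe : ∃ p, p ∈ PL
    · -- some parameter is a pseudo-limit of T : contradiction
      obtain ⟨p, hp⟩ := hPLe
      have hu : cs p + MulOpposite.op s • z0 ∈ T := by
        refine (hinv (cs p + MulOpposite.op s • z0) wd ?_).mpr hwdT
        intro i
        by_cases hiPL : i ∈ PL
        · have hr : v (wd - cs i) = v wd := hPLexact i hiPL wd hwdT
          have heq : cs p + MulOpposite.op s • z0 - cs i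
              = MulOpposite.op s • z0 + (cs p - cs i) := by abel
          rw [heq, hvadd_left _ _ (by
            rw [hvh]
            exact lt_of_lt_of_le hw'gt (hPLpair p hp i hiPL w' hw'T)), hvh, hr]
        · have hlt1 : v (cs i) < v wd := hlt_cs_γ i hiPL
          have hcspi : v (cs p - cs i) = v (cs i) := by
            apply hvsub_right
            exact lt_of_lt_of_le (lt_trans hlt1 hw'gt) (hPLhigh p hp w' hw'T)
          have heq : cs p + MulOpposite.op s • z0 - cs i
              = MulOpposite.op s • z0 + (cs p - cs i) := by abel
          rw [heq, hvadd_right _ _ (by rw [hcspi, hvh]; exact hlt1), hcspi, hτwd_F i hiPL]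
      have hcspT : cs p ∈ T := by
        have h2 := hT_subH _ hu _ hhH
        rwa [add_sub_cancel_right] at h2
      exact hPLnotT p hp hcspT
    · -- no pseudo-limit parameter : the image element of value γ lies in T, contradiction
      push_neg at hPLe
      have hu : MulOpposite.op s • z0 ∈ T := by
        refine (hinv (MulOpposite.op s • z0) wd ?_).mpr hwdT
        intro i
        have hlt1 : v (cs i) < v wd := hlt_cs_γ i (hPLe i)
        rw [hvsub_right _ (cs i) (by rw [hvh]; exact hlt1), hτwd_F i (hPLe i)]
      exact hTHdisj _ hu hhH
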